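/- Let N ≥ 1 and n ≥ 3 be integers, let V, W ∈ ℝ^{N×N} be diagonal matrices with strictly positive diagonal entries, and let S ∈ ℝ^{2N×2N} be invertible with S^{−1} = [[W, 0], [0, W]] Sᵀ. Define A = S [[−V, 0], [0, V]] S^{−1} and B₂ = [I_N, (n−1)I_N] ∈ ℝ^{N×2N}. Then: (a) a vector y ∈ ℝ^{2N} satisfies B₂ S^{−1} y = 0 if and only if y = S ((n−1)x, −x)ᵀ for some x ∈ ℝ^N; and (b) for every such y with x ≠ 0, yᵀ A y = −(n² − 2n) xᵀ W^{−1} V x < 0. Hence B₂ S^{−1} satisfies the strictly dissipative condition yᵀAy < 0 for all nonzero y ∈ ker(B₂S^{−1}). -/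

import Mathlib

open Matrix

private lemma dot_helper {α : Type*} [Fintype α] (S : Matrix α α ℝ) (a b : α → ℝ) :
    (S.mulVec a) ⬝ᵥ b = a ⬝ᵥ (Sᵀ.mulVec b) := by
  rw [dotProduct_comm, Matrix.dotProduct_mulVec, dotProduct_comm, Matrix.mulVec_transpose]

theorem stmt_12 (N n : ℕ) (hN : 1 ≤ N) (hn : 3 ≤ n)
    (v w : Fin N → ℝ) (hv : ∀ i, 0 < v i) (hw : ∀ i, 0 < w i)
    (V W : Matrix (Fin N) (Fin N) ℝ)
    (hV : V = Matrix.diagonal v) (hW : W = Matrix.diagonal w)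
    (S : Matrix (Fin N ⊕ Fin N) (Fin N ⊕ Fin N) ℝ) (hS : IsUnit S.det)
    (hSinv : S⁻¹ = Matrix.fromBlocks W 0 0 W * Sᵀ)
    (A : Matrix (Fin N ⊕ Fin N) (Fin N ⊕ Fin N) ℝ)
    (hA : A = S * Matrix.fromBlocks (-V) 0 0 V * S⁻¹)
    (B₂ : Matrix (Fin N) (Fin N ⊕ Fin N) ℝ)
    (hB₂ : ∀ (i : Fin N) (j : Fin N ⊕ Fin N), B₂ i j =
      Sum.elim (fun j' : Fin N => if i = j' then (1 : ℝ) else 0)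
        (fun j' : Fin N => if i = j' then ((n : ℝ) - 1) else 0) j) :
    (∀ y : Fin N ⊕ Fin N → ℝ,
      B₂.mulVec (S⁻¹.mulVec y) = 0 ↔
        ∃ x : Fin N → ℝ,
          y = S.mulVec (Sum.elim (fun i => ((n : ℝ) - 1) * x i) (fun i => -x i))) ∧
    (∀ x : Fin N → ℝ, x ≠ 0 →
      (S.mulVec (Sum.elim (fun i => ((n : ℝ) - 1) * x i) (fun i => -x i))) ⬝ᵥ
          A.mulVec (S.mulVec (Sum.elim (fun i => ((n : ℝ) - 1) * x i) (fun i => -x i)))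
        = -((n : ℝ) ^ 2 - 2 * n) * (x ⬝ᵥ (W⁻¹ * V).mulVec x) ∧
      (S.mulVec (Sum.elim (fun i => ((n : ℝ) - 1) * x i) (fun i => -x i))) ⬝ᵥ
          A.mulVec (S.mulVec (Sum.elim (fun i => ((n : ℝ) - 1) * x i) (fun i => -x i)))
        < 0) ∧
    (∀ y : Fin N ⊕ Fin N → ℝ, y ≠ 0 → B₂.mulVec (S⁻¹.mulVec y) = 0 →
      y ⬝ᵥ A.mulVec y < 0) := by
  have hw0 : ∀ i, w i ≠ 0 := fun i => ne_of_gt (hw i)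
  have hSinvS : S⁻¹ * S = 1 := Matrix.nonsing_inv_mul S hS
  have hSSinv : S * S⁻¹ = 1 := Matrix.mul_nonsing_inv S hS
  have cancel : ∀ u : Fin N ⊕ Fin N → ℝ, S⁻¹.mulVec (S.mulVec u) = u := by
    intro u; rw [Matrix.mulVec_mulVec, hSinvS, Matrix.one_mulVec]
  have cancel' : ∀ u : Fin N ⊕ Fin N → ℝ, S.mulVec (S⁻¹.mulVec u) = u := by
    intro u; rw [Matrix.mulVec_mulVec, hSSinv, Matrix.one_mulVec]
  -- B₂ mulVec formula
  have hB2mv : ∀ (z : Fin N ⊕ Fin N → ℝ) (i : Fin N),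
      B₂.mulVec z i = z (Sum.inl i) + ((n : ℝ) - 1) * z (Sum.inr i) := by
    intro z i
    simp [Matrix.mulVec, dotProduct, Fintype.sum_sum_type, hB₂, ite_mul,
      Finset.sum_ite_eq, mul_comm]
  -- part (a)
  have parta : ∀ y : Fin N ⊕ Fin N → ℝ,
      B₂.mulVec (S⁻¹.mulVec y) = 0 ↔
        ∃ x : Fin N → ℝ,
          y = S.mulVec (Sum.elim (fun i => ((n : ℝ) - 1) * x i) (fun i => -x i)) := by
    intro y
    constructor
    · intro h
      refine ⟨fun i => -(S⁻¹.mulVec y) (Sum.inr i), ?_⟩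
      have hz : S⁻¹.mulVec y =
          Sum.elim (fun i => ((n : ℝ) - 1) * (fun i => -(S⁻¹.mulVec y) (Sum.inr i)) i)
            (fun i => -(fun i => -(S⁻¹.mulVec y) (Sum.inr i)) i) := by
        funext j
        cases j with
        | inl i =>
          have h2 := congrFun h i
          rw [hB2mv] at h2
          simp only [Pi.zero_apply] at h2
          simp only [Sum.elim_inl]
          linarith
        | inr i => simp
      exact (cancel' y).symm.trans (congrArg S.mulVec hz)
    · rintro ⟨x, rfl⟩
      rw [cancel]
      funext i
      rw [hB2mv]
      simp only [Sum.elim_inl, Sum.elim_inr, Pi.zero_apply]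
      ring
  -- structural matrix facts
  have hG : Matrix.fromBlocks W 0 0 W = Matrix.diagonal (Sum.elim w w) := by
    rw [hW, ← Matrix.fromBlocks_diagonal]
  have h1 : Matrix.diagonal (Sum.elim w w) * (Sᵀ * S) = 1 := by
    rw [← Matrix.mul_assoc, ← hG, ← hSinv]; exact hSinvS
  have h2 : Matrix.diagonal (Sum.elim (fun i => (w i)⁻¹) (fun i => (w i)⁻¹)) *
      Matrix.diagonal (Sum.elim w w) = 1 := by
    rw [Matrix.diagonal_mul_diagonal]
    have hvec : (fun i => Sum.elim (fun i => (w i)⁻¹) (fun i => (w i)⁻¹) i *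
        Sum.elim w w i) = (fun _ : Fin N ⊕ Fin N => (1 : ℝ)) := by
      funext j
      cases j with
      | inl i => simp [inv_mul_cancel₀ (hw0 i)]
      | inr i => simp [inv_mul_cancel₀ (hw0 i)]
    rw [hvec, Matrix.diagonal_one]
  have hStS : Sᵀ * S =
      Matrix.diagonal (Sum.elim (fun i => (w i)⁻¹) (fun i => (w i)⁻¹)) := by
    calc Sᵀ * S = (Matrix.diagonal (Sum.elim (fun i => (w i)⁻¹) (fun i => (w i)⁻¹)) *
          Matrix.diagonal (Sum.elim w w)) * (Sᵀ * S) := by rw [h2, Matrix.one_mul]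
      _ = Matrix.diagonal (Sum.elim (fun i => (w i)⁻¹) (fun i => (w i)⁻¹)) *
          (Matrix.diagonal (Sum.elim w w) * (Sᵀ * S)) := by rw [Matrix.mul_assoc]
      _ = Matrix.diagonal (Sum.elim (fun i => (w i)⁻¹) (fun i => (w i)⁻¹)) := by
          rw [h1, Matrix.mul_one]
  have hWinv : W⁻¹ = Matrix.diagonal (fun i => (w i)⁻¹) := by
    refine Matrix.inv_eq_left_inv ?_
    rw [hW, Matrix.diagonal_mul_diagonal]
    convert Matrix.diagonal_one
    simp [inv_mul_cancel₀ (hw0 _)]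
  have hD : Matrix.fromBlocks (-V) 0 0 V =
      Matrix.diagonal (Sum.elim (fun i => -(v i)) v) := by
    rw [hV, Matrix.diagonal_neg, Matrix.fromBlocks_diagonal]
  -- quadratic form computation
  have key : ∀ x : Fin N → ℝ,
      (S.mulVec (Sum.elim (fun i => ((n : ℝ) - 1) * x i) (fun i => -x i))) ⬝ᵥ
          A.mulVec (S.mulVec (Sum.elim (fun i => ((n : ℝ) - 1) * x i) (fun i => -x i)))
        = -((n : ℝ) ^ 2 - 2 * n) * (x ⬝ᵥ (W⁻¹ * V).mulVec x) := by
    intro x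
    set w' : Fin N ⊕ Fin N → ℝ :=
      Sum.elim (fun i => ((n : ℝ) - 1) * x i) (fun i => -x i) with hw'
    have hAS : A * S = S * Matrix.fromBlocks (-V) 0 0 V := by
      rw [hA, Matrix.mul_assoc, hSinvS, Matrix.mul_one]
    have lhs_eq : (S.mulVec w') ⬝ᵥ A.mulVec (S.mulVec w')
        = w' ⬝ᵥ (Matrix.diagonal (Sum.elim
            (fun i => (w i)⁻¹ * (-(v i))) (fun i => (w i)⁻¹ * v i))).mulVec w' := by
      rw [Matrix.mulVec_mulVec, hAS, dot_helper, Matrix.mulVec_mulVec, ← Matrix.mul_assoc, hStS, hD,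
        Matrix.diagonal_mul_diagonal]
      congr 2
      congr 1
      funext j
      cases j <;> simp [Matrix.mulVec_diagonal] <;> ring
    rw [lhs_eq]
    have rhs_eq : x ⬝ᵥ (W⁻¹ * V).mulVec x
        = ∑ i, x i * ((w i)⁻¹ * v i * x i) := by
      rw [hWinv, hV, Matrix.diagonal_mul_diagonal]
      simp [dotProduct, Matrix.mulVec_diagonal]
    rw [rhs_eq]
    simp only [dotProduct, Matrix.mulVec_diagonal, Fintype.sum_sum_type]
    simp only [hw', Sum.elim_inl, Sum.elim_inr]
    rw [← Finset.sum_add_distrib, Finset.mul_sum]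
    apply Finset.sum_congr rfl
    intro i _
    ring
  have pos : ∀ x : Fin N → ℝ, x ≠ 0 → 0 < x ⬝ᵥ (W⁻¹ * V).mulVec x := by
    intro x hx
    have rhs_eq : x ⬝ᵥ (W⁻¹ * V).mulVec x
        = ∑ i, (w i)⁻¹ * v i * (x i) ^ 2 := by
      rw [hWinv, hV, Matrix.diagonal_mul_diagonal]
      simp only [dotProduct, Matrix.mulVec_diagonal]
      apply Finset.sum_congr rfl
      intro i _
      ring
    rw [rhs_eq]
    obtain ⟨i, hi⟩ := Function.ne_iff.mp hx
    apply Finset.sum_pos'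
    · intro j _
      exact mul_nonneg (mul_nonneg (inv_pos.mpr (hw j)).le (hv j).le) (sq_nonneg _)
    · refine ⟨i, Finset.mem_univ i, ?_⟩
      have hxi : x i ≠ 0 := hi
      have hsq : 0 < (x i) ^ 2 := by positivity
      exact mul_pos (mul_pos (inv_pos.mpr (hw i)) (hv i)) hsq
  have hconst : -((n : ℝ) ^ 2 - 2 * n) < 0 := by
    have h3 : (3 : ℝ) ≤ (n : ℝ) := by exact_mod_cast hn
    nlinarith
  refine ⟨parta, fun x hx => ⟨key x, ?_⟩, ?_⟩
  · rw [key x]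
    exact mul_neg_of_neg_of_pos hconst (pos x hx)
  · intro y hy hker
    obtain ⟨x, rfl⟩ := (parta y).mp hker
    have hx : x ≠ 0 := by
      rintro rfl
      apply hy
      have hz : (Sum.elim (fun i => ((n : ℝ) - 1) * (0 : Fin N → ℝ) i)
          (fun i => -(0 : Fin N → ℝ) i)) = (0 : Fin N ⊕ Fin N → ℝ) := by
        funext j; cases j <;> simp
      rw [hz, Matrix.mulVec_zero]
    rw [key x]
    exact mul_neg_of_neg_of_pos hconst (pos x hx)
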